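/- In the braid group B(Ã_n), the element σ_n σ_{n−1} ⋯ σ_1 a_{n+1} conjugates the subgroup B(Ã_{n−1}) (generated by σ_1,…,σ_{n−1} and a_n = σ_n a_{n+1} σ_n^{-1}) into itself; explicitly, conjugation by (σ_n ⋯ σ_1 a_{n+1}) induces an automorphism ψ of B(Ã_{n−1}), so that for all h ∈ B(Ã_{n−1}): (σ_n ⋯ σ_1 a_{n+1}) h = ψ[h] (σ_n ⋯ σ_1 a_{n+1}). -/

import Mathlib

/-- The defining relators of the affine braid group of type `Ãₙ`: generators indexed by
`Fin (n+1)` arranged in a cycle; cyclically adjacent generators satisfy the braid relation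
`xyx = yxy`, all other pairs commute. -/
def affineBraidRels (n : ℕ) : Set (FreeGroup (Fin (n + 1))) :=
  { r | ∃ i j : Fin (n + 1),
      ((i - j = 1 ∨ j - i = 1) ∧
        r = FreeGroup.of i * FreeGroup.of j * FreeGroup.of i *
          (FreeGroup.of j * FreeGroup.of i * FreeGroup.of j)⁻¹) ∨
      (i ≠ j ∧ ¬(i - j = 1 ∨ j - i = 1) ∧
        r = FreeGroup.of i * FreeGroup.of j * (FreeGroup.of j * FreeGroup.of i)⁻¹) }

/-- The affine braid group `B(Ãₙ)`. -/
def AffineBraidGroup (n : ℕ) : Type := PresentedGroup (affineBraidRels n)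

instance (n : ℕ) : Group (AffineBraidGroup n) := by
  unfold AffineBraidGroup; infer_instance

open Fin.NatCast in
/-- The generator with 1-based subscript `k`: `σ_k` for `1 ≤ k ≤ n`, and `a_{n+1}` for
`k = n + 1`. -/
def bgen (n : ℕ) (k : ℕ) : AffineBraidGroup n :=
  PresentedGroup.of ((k - 1 : ℕ) : Fin (n + 1))

/-- The product of the generators with the given (1-based) subscripts. -/
def bword (n : ℕ) (l : List ℕ) : AffineBraidGroup n := (l.map (bgen n)).prod

/-- The decreasing word `[i, i-1, ..., j]` of (1-based) generator subscripts. -/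
def decW (i j : ℕ) : List ℕ := (List.range' j (i + 1 - j)).reverse

/-- The increasing word `[i, i+1, ..., j]` of (1-based) generator subscripts. -/
def incW (i j : ℕ) : List ℕ := List.range' i (j + 1 - i)

namespace ABGAux

open Fin.NatCast

lemma rel_one {n : ℕ} {r : FreeGroup (Fin (n+1))} (hr : r ∈ affineBraidRels n) :
    PresentedGroup.mk (affineBraidRels n) r = 1 :=
  (QuotientGroup.eq_one_iff r).mpr (Subgroup.subset_normalClosure hr)

lemma braid_fin {n : ℕ} (i j : Fin (n+1)) (h : i - j = 1 ∨ j - i = 1) :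
    (PresentedGroup.of i : AffineBraidGroup n) * PresentedGroup.of j * PresentedGroup.of i
      = PresentedGroup.of j * PresentedGroup.of i * PresentedGroup.of j := by
  have h1 : PresentedGroup.mk (affineBraidRels n)
      (FreeGroup.of i * FreeGroup.of j * FreeGroup.of i *
        (FreeGroup.of j * FreeGroup.of i * FreeGroup.of j)⁻¹) = 1 :=
    rel_one ⟨i, j, Or.inl ⟨h, rfl⟩⟩
  simp only [map_mul, map_inv] at h1
  exact mul_inv_eq_one.mp h1

lemma comm_fin {n : ℕ} (i j : Fin (n+1)) (hne : i ≠ j) (h : ¬(i - j = 1 ∨ j - i = 1)) :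
    Commute (PresentedGroup.of i : AffineBraidGroup n) (PresentedGroup.of j) := by
  have h1 : PresentedGroup.mk (affineBraidRels n)
      (FreeGroup.of i * FreeGroup.of j * (FreeGroup.of j * FreeGroup.of i)⁻¹) = 1 :=
    rel_one ⟨i, j, Or.inr ⟨hne, h, rfl⟩⟩
  simp only [map_mul, map_inv] at h1
  exact mul_inv_eq_one.mp h1

lemma sub_eq_one_iff {n : ℕ} (hn : 1 ≤ n) (a b : Fin (n+1)) :
    a - b = 1 ↔ ((n+1) - b.val + a.val) % (n+1) = 1 := by
  rw [Fin.ext_iff, Fin.sub_def, Fin.val_one' (n+1), Nat.mod_eq_of_lt (show 1 < n + 1 by omega)]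

lemma bgen_braid {n k : ℕ} (h1 : 1 ≤ k) (h2 : k ≤ n) :
    bgen n k * bgen n (k+1) * bgen n k = bgen n (k+1) * bgen n k * bgen n (k+1) := by
  have hadj : ((k + 1 - 1 : ℕ) : Fin (n+1)) - ((k - 1 : ℕ) : Fin (n+1)) = 1 := by
    rw [sub_eq_one_iff (by omega)]
    simp only [Fin.val_natCast]
    rw [Nat.mod_eq_of_lt (show k + 1 - 1 < n + 1 by omega),
        Nat.mod_eq_of_lt (show k - 1 < n + 1 by omega)]
    have e : (n+1) - (k-1) + (k + 1 - 1) = 1 + (n+1) := by omega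
    rw [e, Nat.add_mod_right]
    exact Nat.mod_eq_of_lt (by omega)
  exact braid_fin _ _ (Or.inr hadj)

lemma bgen_braid_wrap {n : ℕ} (hn : 1 ≤ n) :
    bgen n (n+1) * bgen n 1 * bgen n (n+1) = bgen n 1 * bgen n (n+1) * bgen n 1 := by
  have hadj : ((1 - 1 : ℕ) : Fin (n+1)) - ((n + 1 - 1 : ℕ) : Fin (n+1)) = 1 := by
    rw [sub_eq_one_iff hn]
    simp only [Fin.val_natCast]
    rw [Nat.mod_eq_of_lt (show 1 - 1 < n + 1 by omega),
        Nat.mod_eq_of_lt (show n + 1 - 1 < n + 1 by omega)]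
    have e : (n+1) - (n + 1 - 1) + (1 - 1) = 1 := by omega
    rw [e]
    exact Nat.mod_eq_of_lt (by omega)
  exact braid_fin _ _ (Or.inr hadj)

lemma bgen_comm {n k l : ℕ} (hk : 1 ≤ k) (hkl : k + 2 ≤ l) (hl : l ≤ n + 1)
    (hx : ¬(k = 1 ∧ l = n + 1)) : Commute (bgen n k) (bgen n l) := by
  have hlk : l - k ≤ n - 1 := by omega
  apply comm_fin
  · intro h
    have := congrArg Fin.val h
    simp only [Fin.val_natCast] at this
    rw [Nat.mod_eq_of_lt (show k - 1 < n + 1 by omega),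
        Nat.mod_eq_of_lt (show l - 1 < n + 1 by omega)] at this
    omega
  · rintro (h | h)
    · rw [sub_eq_one_iff (by omega)] at h
      simp only [Fin.val_natCast] at h
      rw [Nat.mod_eq_of_lt (show k - 1 < n + 1 by omega),
          Nat.mod_eq_of_lt (show l - 1 < n + 1 by omega)] at h
      rw [Nat.mod_eq_of_lt (show (n+1) - (l-1) + (k-1) < n + 1 by omega)] at h
      omega
    · rw [sub_eq_one_iff (by omega)] at h
      simp only [Fin.val_natCast] at h
      rw [Nat.mod_eq_of_lt (show k - 1 < n + 1 by omega),
          Nat.mod_eq_of_lt (show l - 1 < n + 1 by omega)] at h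
      have e : (n+1) - (k-1) + (l-1) = (l - k) + (n+1) := by omega
      rw [e, Nat.add_mod_right, Nat.mod_eq_of_lt (by omega)] at h
      omega

end ABGAux

namespace ABGAux

lemma bword_nil {n : ℕ} : bword n [] = 1 := rfl

lemma bword_cons {n : ℕ} (k : ℕ) (l : List ℕ) :
    bword n (k :: l) = bgen n k * bword n l := by simp [bword]

lemma bword_append {n : ℕ} (l1 l2 : List ℕ) :
    bword n (l1 ++ l2) = bword n l1 * bword n l2 := by simp [bword]

lemma bword_comm {n : ℕ} {l : List ℕ} {x : AffineBraidGroup n}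
    (h : ∀ m ∈ l, Commute (bgen n m) x) : Commute (bword n l) x := by
  apply Commute.list_prod_left
  intro z hz
  rcases List.mem_map.mp hz with ⟨m, hm, rfl⟩
  exact h m hm

lemma decW_zero : decW 0 1 = [] := by simp [decW]

lemma decW_succ (i : ℕ) : decW (i+1) 1 = (i+1) :: decW i 1 := by
  show (List.range' 1 (i + 1 + 1 - 1)).reverse = (i+1) :: (List.range' 1 (i + 1 - 1)).reverse
  have h1 : i + 1 + 1 - 1 = i + 1 := by omega
  have h2 : i + 1 - 1 = i := by omega
  rw [h1, h2, List.range'_concat]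
  simp [Nat.add_comm]

lemma decW_split (i : ℕ) (h : 1 ≤ i) : decW i 1 = decW i 2 ++ [1] := by
  show (List.range' 1 (i + 1 - 1)).reverse = (List.range' 2 (i + 1 - 2)).reverse ++ [1]
  obtain ⟨j, rfl⟩ : ∃ j, i = j + 1 := ⟨i - 1, by omega⟩
  have h1 : j + 1 + 1 - 1 = j + 1 := by omega
  have h2 : j + 1 + 1 - 2 = j := by omega
  rw [h1, h2, List.range'_succ]
  simp

lemma mem_decW {i j m : ℕ} (h : m ∈ decW i j) : j ≤ m ∧ m ≤ i := by
  unfold decW at h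
  rw [List.mem_reverse, List.mem_range'_1] at h
  omega

lemma c_shift {n : ℕ} : ∀ i k : ℕ, 1 ≤ k → k + 1 ≤ i → i ≤ n →
    bword n (decW i 1) * bgen n (k+1) = bgen n k * bword n (decW i 1) := by
  intro i
  induction i with
  | zero => intro k _ h2 _; omega
  | succ i ih =>
    intro k hk h2 h3
    rw [decW_succ, bword_cons]
    rcases Nat.lt_or_ge k i with hlt | hge
    · -- i ≥ k+1 : inductive step
      have hcomm : Commute (bgen n k) (bgen n (i+1)) :=
        bgen_comm hk (by omega) (by omega) (by omega)
      rw [mul_assoc, ih k hk (by omega) (by omega), ← mul_assoc, ← hcomm.eq, mul_assoc]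
    · -- base: i = k
      have hik : k = i := by omega
      subst hik
      obtain ⟨k', rfl⟩ : ∃ k', k = k' + 1 := ⟨k - 1, by omega⟩
      rw [decW_succ, bword_cons]
      have hW : Commute (bword n (decW k' 1)) (bgen n (k'+1+1)) := by
        apply bword_comm
        intro m hm
        have := mem_decW hm
        exact bgen_comm this.1 (by omega) (by omega) (by omega)
      have hbr := bgen_braid (n := n) (k := k'+1) (by omega) (by omega)
      calc bgen n (k'+1+1) * (bgen n (k'+1) * bword n (decW k' 1)) * bgen n (k'+1+1)
          = bgen n (k'+1+1) * bgen n (k'+1) * (bword n (decW k' 1) * bgen n (k'+1+1)) := by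
            group
        _ = bgen n (k'+1+1) * bgen n (k'+1) * (bgen n (k'+1+1) * bword n (decW k' 1)) := by
            rw [hW.eq]
        _ = bgen n (k'+1+1) * bgen n (k'+1) * bgen n (k'+1+1) * bword n (decW k' 1) := by
            group
        _ = bgen n (k'+1) * bgen n (k'+1+1) * bgen n (k'+1) * bword n (decW k' 1) := by
            rw [← hbr]
        _ = bgen n (k'+1) * (bgen n (k'+1+1) * (bgen n (k'+1) * bword n (decW k' 1))) := by
            group

end ABGAux

namespace ABGAux

lemma delta_eq {n : ℕ} :
    bword n (decW n 1 ++ [n+1]) = bword n (decW n 1) * bgen n (n+1) := by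
  rw [bword_append, bword_cons, bword_nil, mul_one]

/-- Rule I : δ σ_k = σ_{k-1} δ for 2 ≤ k ≤ n-1 -/
lemma rule_I {n k : ℕ} (hn : 2 ≤ n) (h2 : 2 ≤ k) (h3 : k ≤ n - 1) :
    bword n (decW n 1 ++ [n+1]) * bgen n k
      = bgen n (k-1) * bword n (decW n 1 ++ [n+1]) := by
  rw [delta_eq]
  have hc : Commute (bgen n (n+1)) (bgen n k) :=
    (bgen_comm (show 1 ≤ k by omega) (by omega) (by omega) (by omega)).symm
  obtain ⟨k', rfl⟩ : ∃ k', k = k' + 1 := ⟨k - 1, by omega⟩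
  have hs := c_shift n k' (by omega) (by omega) (le_refl n)
  calc bword n (decW n 1) * bgen n (n+1) * bgen n (k'+1)
      = bword n (decW n 1) * (bgen n (n+1) * bgen n (k'+1)) := by group
    _ = bword n (decW n 1) * (bgen n (k'+1) * bgen n (n+1)) := by rw [hc.eq]
    _ = (bword n (decW n 1) * bgen n (k'+1)) * bgen n (n+1) := by group
    _ = (bgen n k' * bword n (decW n 1)) * bgen n (n+1) := by rw [hs]
    _ = bgen n (k'+1-1) * (bword n (decW n 1) * bgen n (n+1)) := by
        have : k' + 1 - 1 = k' := by omega
        rw [this]; group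

/-- Rule III : δ a_n = σ_{n-1} δ -/
lemma rule_III {n : ℕ} (hn : 2 ≤ n) :
    bword n (decW n 1 ++ [n+1]) * (bgen n n * bgen n (n+1) * (bgen n n)⁻¹)
      = bgen n (n-1) * bword n (decW n 1 ++ [n+1]) := by
  rw [delta_eq]
  have hbr := bgen_braid (n := n) (k := n) (by omega) (le_refl n)
  -- hbr : σn * A * σn = A * σn * A
  have hs : bword n (decW n 1) * bgen n n = bgen n (n-1) * bword n (decW n 1) := by
    have := c_shift (n := n) n (n-1) (by omega) (by omega) (le_refl n)
    have e : n - 1 + 1 = n := by omega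
    rwa [e] at this
  calc bword n (decW n 1) * bgen n (n+1) * (bgen n n * bgen n (n+1) * (bgen n n)⁻¹)
      = bword n (decW n 1) * (bgen n (n+1) * bgen n n * bgen n (n+1)) * (bgen n n)⁻¹ := by
        group
    _ = bword n (decW n 1) * (bgen n n * bgen n (n+1) * bgen n n) * (bgen n n)⁻¹ := by
        rw [← hbr]
    _ = bword n (decW n 1) * bgen n n * bgen n (n+1) := by group
    _ = bgen n (n-1) * bword n (decW n 1) * bgen n (n+1) := by rw [hs]
    _ = bgen n (n-1) * (bword n (decW n 1) * bgen n (n+1)) := by group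

/-- Rule II : δ σ_1 = a_n δ -/
lemma rule_II {n : ℕ} (hn : 2 ≤ n) :
    bword n (decW n 1 ++ [n+1]) * bgen n 1
      = (bgen n n * bgen n (n+1) * (bgen n n)⁻¹) * bword n (decW n 1 ++ [n+1]) := by
  rw [delta_eq]
  -- C_n = σ_n * C_{n-1},  C_{n-1} = M * σ_1 with M = bword (decW (n-1) 2)
  have hC : bword n (decW n 1) = bgen n n * bword n (decW (n-1) 1) := by
    obtain ⟨m, rfl⟩ : ∃ m, n = m + 1 := ⟨n - 1, by omega⟩
    rw [decW_succ, bword_cons]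
    norm_num
  have hC2 : bword n (decW (n-1) 1) = bword n (decW (n-1) 2) * bgen n 1 := by
    rw [decW_split (n-1) (by omega), bword_append, bword_cons, bword_nil, mul_one]
  have hM : Commute (bword n (decW (n-1) 2)) (bgen n (n+1)) := by
    apply bword_comm
    intro m hm
    have := mem_decW hm
    exact bgen_comm (by omega) (by omega) (by omega) (by omega)
  have hbr := bgen_braid_wrap (n := n) (by omega)
  -- hbr : A * σ1 * A = σ1 * A * σ1
  rw [hC, hC2]
  set M := bword n (decW (n-1) 2)
  set A := bgen n (n+1)
  set s1 := bgen n 1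
  set sn := bgen n n
  calc sn * (M * s1) * A * s1
      = sn * M * (s1 * A * s1) := by group
    _ = sn * M * (A * s1 * A) := by rw [← hbr]
    _ = sn * (M * A) * (s1 * A) := by group
    _ = sn * (A * M) * (s1 * A) := by rw [hM.eq]
    _ = sn * A * sn⁻¹ * (sn * (M * s1) * A) := by group

end ABGAux

/-- Conjugation by `δ = σₙσₙ₋₁ ⋯ σ₁ a_{n+1}` maps the copy of `B(Ãₙ₋₁)` inside `B(Ãₙ)`
(the subgroup generated by `σ₁, …, σₙ₋₁` and `aₙ = σₙ a_{n+1} σₙ⁻¹`) onto itself, i.e. it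
induces an automorphism `ψ` of this subgroup, so `δ h = ψ[h] δ` for all `h` in it. -/
theorem conj_delta_preserves_subgroup (n : ℕ) (hn : 2 ≤ n) :
    Subgroup.map (MulAut.conj (bword n (decW n 1 ++ [n + 1]))).toMonoidHom
      (Subgroup.closure
        ({x | ∃ k, 1 ≤ k ∧ k ≤ n - 1 ∧ x = bgen n k} ∪
          {bgen n n * bgen n (n + 1) * (bgen n n)⁻¹})) =
    Subgroup.closure
      ({x | ∃ k, 1 ≤ k ∧ k ≤ n - 1 ∧ x = bgen n k} ∪
        {bgen n n * bgen n (n + 1) * (bgen n n)⁻¹}) := by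
  classical
  set δ := bword n (decW n 1 ++ [n + 1]) with hδ
  set a : AffineBraidGroup n := bgen n n * bgen n (n + 1) * (bgen n n)⁻¹ with ha
  set S : Set (AffineBraidGroup n) :=
    {x | ∃ k, 1 ≤ k ∧ k ≤ n - 1 ∧ x = bgen n k} ∪ {a} with hS
  have conj_eq : ∀ x y : AffineBraidGroup n,
      δ * x = y * δ → (MulAut.conj δ).toMonoidHom x = y := by
    intro x y h
    show δ * x * δ⁻¹ = y
    rw [mul_inv_eq_iff_eq_mul]
    exact h
  rw [MonoidHom.map_closure]
  congr 1
  ext x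
  simp only [Set.mem_image, hS, Set.mem_union, Set.mem_setOf_eq, Set.mem_singleton_iff]
  constructor
  · rintro ⟨s, hs, rfl⟩
    rcases hs with ⟨k, hk1, hk2, rfl⟩ | rfl
    · rcases Nat.eq_or_lt_of_le hk1 with h1 | h1
      · -- k = 1 : image is a
        right
        exact conj_eq _ _ (h1 ▸ ABGAux.rule_II hn)
      · -- 2 ≤ k : image is σ_{k-1}
        left
        exact ⟨k - 1, by omega, by omega,
          conj_eq _ _ (ABGAux.rule_I hn (by omega) hk2)⟩
    · -- s = a : image is σ_{n-1}
      left
      exact ⟨n - 1, by omega, le_refl _,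
        conj_eq _ _ (ABGAux.rule_III hn)⟩
  · rintro (⟨k, hk1, hk2, rfl⟩ | rfl)
    · rcases Nat.lt_or_ge k (n - 1) with h1 | h1
      · -- preimage σ_{k+1}
        refine ⟨bgen n (k+1), Or.inl ⟨k+1, by omega, by omega, rfl⟩, ?_⟩
        have := conj_eq _ _ (ABGAux.rule_I (k := k+1) hn (by omega) (by omega))
        simpa using this
      · -- k = n-1 : preimage a
        have hk : k = n - 1 := by omega
        subst hk
        exact ⟨a, Or.inr rfl, conj_eq _ _ (ABGAux.rule_III hn)⟩
    · -- x = a : preimage σ_1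
      exact ⟨bgen n 1, Or.inl ⟨1, le_refl _, by omega, rfl⟩,
        conj_eq _ _ (ABGAux.rule_II hn)⟩
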